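/- Let E be a meet-semilattice with bottom ⊥ and X ⊆ E × Finset E. A subset U of \hat{E}_X is compact and open (in the subspace topology from E → Bool) if and only if U is a finite union of sets of the form M_a \ (M_{b₁} ∪ … ∪ M_{bₖ}) with k ≥ 0, a, b₁, …, bₖ ∈ E and b₁, …, bₖ ≤ a. In particular, the sets M_a (a ∈ E) generate the generalized Boolean algebra of compact open subsets of \hat{E}_X. -/

import Mathlib

/-- The set of `X`-to-join characters of a meet-semilattice `E` with bottom. -/
def XtoJoinChars {E : Type*} [SemilatticeInf E] [OrderBot E]
    (X : Set (E × Finset E)) : Set (E → Bool) :=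
  {φ | φ ⊥ = false ∧ (∀ x y : E, φ (x ⊓ y) = (φ x && φ y)) ∧ (∃ x : E, φ x = true) ∧
    ∀ p ∈ X, (φ p.1 = true ↔ ∃ f ∈ p.2, φ f = true)}

/-- The basic set `M_a = {φ ∈ Ê_X : φ(a) = true}`. -/
def Mset {E : Type*} [SemilatticeInf E] [OrderBot E]
    (X : Set (E × Finset E)) (a : E) : Set (XtoJoinChars X) :=
  {φ | (φ : E → Bool) a = true}

section Aux

variable {E : Type*} [SemilatticeInf E] [OrderBot E] {X : Set (E × Finset E)}

lemma char_mono {φ : E → Bool} (hmul : ∀ x y : E, φ (x ⊓ y) = (φ x && φ y))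
    {x y : E} (hxy : x ≤ y) (hx : φ x = true) : φ y = true := by
  have h := hmul x y
  rw [inf_eq_left.mpr hxy, hx] at h
  simpa using h.symm

lemma char_inf'_true {φ : E → Bool} (hmul : ∀ x y : E, φ (x ⊓ y) = (φ x && φ y))
    (T : Finset E) (hT : T.Nonempty) (h : ∀ t ∈ T, φ t = true) :
    φ (T.inf' hT id) = true := by
  induction hT using Finset.Nonempty.cons_induction with
  | singleton a => simpa using h a (by simp)
  | cons a s ha hs ih =>
      rw [Finset.inf'_cons hs, hmul, ih (fun t ht => h t (Finset.mem_cons_of_mem ht))]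
      simpa using h a (Finset.mem_cons_self a s)

lemma Mset_isClopen (a : E) : IsClopen (Mset X a) :=
  (isClopen_discrete {true}).preimage
    ((continuous_apply a).comp continuous_subtype_val)

lemma piece_isOpen (a : E) (b : Finset E) :
    IsOpen (Mset X a \ ⋃ x ∈ b, Mset X x) :=
  (Mset_isClopen a).isOpen.sdiff
    (b.finite_toSet.isClosed_biUnion fun x _ => (Mset_isClopen (X := X) x).isClosed)

lemma coordSet_isClopen (c : E) (v : Bool) : IsClopen {φ : E → Bool | φ c = v} :=
  (isClopen_discrete {v}).preimage (continuous_apply c)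

lemma piece_isCompact (a : E) (b : Finset E) :
    IsCompact (Mset X a \ ⋃ x ∈ b, Mset X x) := by
  rw [Subtype.isCompact_iff]
  have himg : Subtype.val '' (Mset X a \ ⋃ x ∈ b, Mset X x) =
      {φ : E → Bool | φ ⊥ = false ∧ (∀ x y : E, φ (x ⊓ y) = (φ x && φ y)) ∧
        (∀ p ∈ X, (φ p.1 = true ↔ ∃ f ∈ p.2, φ f = true)) ∧
        φ a = true ∧ ∀ x ∈ b, φ x = false} := by
    ext φ
    constructor
    · rintro ⟨ψ, ⟨hMa, hMb⟩, rfl⟩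
      obtain ⟨h1, h2, _, h4⟩ := ψ.2
      refine ⟨h1, h2, h4, hMa, fun x hx => ?_⟩
      have : (ψ : XtoJoinChars X) ∉ Mset X x := fun hc =>
        hMb (Set.mem_biUnion hx hc)
      simpa [Mset] using this
    · rintro ⟨h1, h2, h4, ha, hb⟩
      have hmem : φ ∈ XtoJoinChars X := ⟨h1, h2, ⟨a, ha⟩, h4⟩
      refine ⟨⟨φ, hmem⟩, ⟨ha, ?_⟩, rfl⟩
      intro hc
      obtain ⟨x, hx, hx'⟩ := Set.mem_iUnion₂.mp hc
      have hxt : φ x = true := hx'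
      rw [hb x hx] at hxt
      exact Bool.false_ne_true hxt
  rw [himg]
  apply IsClosed.isCompact
  have hrepr : {φ : E → Bool | φ ⊥ = false ∧ (∀ x y : E, φ (x ⊓ y) = (φ x && φ y)) ∧
        (∀ p ∈ X, (φ p.1 = true ↔ ∃ f ∈ p.2, φ f = true)) ∧
        φ a = true ∧ ∀ x ∈ b, φ x = false} =
      {φ : E → Bool | φ ⊥ = false} ∩
      (⋂ x : E, ⋂ y : E, {φ : E → Bool | φ (x ⊓ y) = (φ x && φ y)}) ∩
      (⋂ p ∈ X, (({φ : E → Bool | φ p.1 = true} ∩ ⋃ f ∈ p.2, {φ : E → Bool | φ f = true}) ∪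
        ({φ : E → Bool | φ p.1 = true}ᶜ ∩ (⋃ f ∈ p.2, {φ : E → Bool | φ f = true})ᶜ))) ∩
      {φ : E → Bool | φ a = true} ∩ ⋂ x ∈ b, {φ : E → Bool | φ x = false} := by
    ext φ
    simp only [Set.mem_inter_iff, Set.mem_iInter, Set.mem_setOf_eq, Set.mem_union,
      Set.mem_compl_iff, Set.mem_iUnion, exists_prop]
    constructor
    · rintro ⟨h1, h2, h4, ha, hb⟩
      exact ⟨⟨⟨⟨h1, fun x y => h2 x y⟩, fun p hp => by
        rcases h : φ p.1 with _ | _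
        · exact Or.inr ⟨by simp, fun ⟨f, hf, hf'⟩ => by
            simpa [h] using (h4 p hp).mpr ⟨f, hf, hf'⟩⟩
        · exact Or.inl ⟨rfl, (h4 p hp).mp h⟩⟩, ha⟩, hb⟩
    · rintro ⟨⟨⟨⟨h1, h2⟩, h3⟩, ha⟩, hb⟩
      refine ⟨h1, h2, fun p hp => ?_, ha, hb⟩
      rcases h3 p hp with ⟨hp1, hp2⟩ | ⟨hp1, hp2⟩
      · exact ⟨fun _ => hp2, fun _ => hp1⟩
      · constructor
        · intro h; exact absurd h hp1
        · intro h; exact absurd h hp2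
  rw [hrepr]
  refine IsClosed.inter (IsClosed.inter (IsClosed.inter (IsClosed.inter
    (coordSet_isClopen ⊥ false).isClosed ?_) ?_) (coordSet_isClopen a true).isClosed) ?_
  · refine isClosed_iInter fun x => isClosed_iInter fun y => ?_
    have : {φ : E → Bool | φ (x ⊓ y) = (φ x && φ y)} =
        (fun φ : E → Bool => (φ (x ⊓ y), φ x, φ y)) ⁻¹'
          {t : Bool × Bool × Bool | t.1 = (t.2.1 && t.2.2)} := rfl
    rw [this]
    exact (isClosed_discrete _).preimage
      ((continuous_apply _).prodMk ((continuous_apply _).prodMk (continuous_apply _)))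
  · refine isClosed_biInter fun p _ => ?_
    have hL : IsClopen (⋃ f ∈ p.2, {φ : E → Bool | φ f = true}) :=
      ⟨p.2.finite_toSet.isClosed_biUnion fun f _ => (coordSet_isClopen f true).isClosed,
        isOpen_biUnion fun f _ => (coordSet_isClopen f true).isOpen⟩
    exact IsClosed.union ((coordSet_isClopen p.1 true).isClosed.inter hL.isClosed)
      ((isClosed_compl_iff.mpr (coordSet_isClopen p.1 true).isOpen).inter
        (isClosed_compl_iff.mpr hL.isOpen))
  · exact isClosed_biInter fun x _ => (coordSet_isClopen x false).isClosed

end Aux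

/-- A subset of `Ê_X` is compact open iff it is a finite union of sets of
the form `M_a \ (M_{b₁} ∪ ⋯ ∪ M_{bₖ})` with `b₁, …, bₖ ≤ a`.  In particular the sets `M_a`
generate the generalized Boolean algebra of compact open subsets of `Ê_X`. -/
theorem statement6 {E : Type*} [SemilatticeInf E] [OrderBot E]
    (X : Set (E × Finset E)) (U : Set (XtoJoinChars X)) :
    (IsCompact U ∧ IsOpen U) ↔
      ∃ (n : ℕ) (a : Fin n → E) (b : Fin n → Finset E),
        (∀ i, ∀ x ∈ b i, x ≤ a i) ∧
        U = ⋃ i, (Mset X (a i) \ ⋃ x ∈ b i, Mset X x) := by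
  constructor
  · rintro ⟨hc, ho⟩
    have key : ∀ φ : U, ∃ (a : E) (b : Finset E),
        (∀ x ∈ b, x ≤ a) ∧ (φ : XtoJoinChars X) ∈ (Mset X a \ ⋃ x ∈ b, Mset X x) ∧
        (Mset X a \ ⋃ x ∈ b, Mset X x) ⊆ U := by
      rintro ⟨φ, hφU⟩
      classical
      obtain ⟨V, hV, hVU⟩ := isOpen_induced_iff.mp ho
      have hφV : (φ : E → Bool) ∈ V := by rw [← hVU] at hφU; exact hφU
      obtain ⟨I, u, hu, hpi⟩ := isOpen_pi_iff.mp hV _ hφV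
      obtain ⟨hbot, hmul, ⟨x₀, hx₀⟩, hX⟩ := φ.2
      set S : Finset E := insert x₀ I with hS
      set T : Finset E := S.filter (fun s => (φ : E → Bool) s = true) with hT
      have hTne : T.Nonempty := ⟨x₀, by simp [hT, hS, hx₀]⟩
      set a : E := T.inf' hTne id with ha
      have hφa : (φ : E → Bool) a = true :=
        char_inf'_true hmul T hTne fun t ht => (Finset.mem_filter.mp ht).2
      set b : Finset E :=
        (S.filter (fun s => (φ : E → Bool) s = false)).image (fun s => a ⊓ s) with hb
      -- key agreement fact
      have hagree : ∀ ψ : XtoJoinChars X,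
          ψ ∈ (Mset X a \ ⋃ x ∈ b, Mset X x) → ∀ s ∈ S,
          (ψ : E → Bool) s = (φ : E → Bool) s := by
        rintro ψ ⟨hψa, hψb⟩ s hsS
        obtain ⟨_, hψmul, _, _⟩ := ψ.2
        rcases hfs : (φ : E → Bool) s with _ | _
        · -- φ s = false, so a ⊓ s ∈ b and ψ (a ⊓ s) = false
          have hmem : a ⊓ s ∈ b := by
            rw [hb]
            exact Finset.mem_image.mpr ⟨s, Finset.mem_filter.mpr ⟨hsS, hfs⟩, rfl⟩
          have hnot : ψ ∉ Mset X (a ⊓ s) := fun hc => hψb (Set.mem_biUnion hmem hc)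
          have h0 : (ψ : E → Bool) (a ⊓ s) = false := by
            simpa [Mset] using hnot
          have h1 := hψmul a s
          rw [h0, hψa] at h1
          simpa using h1.symm
        · -- φ s = true, so s ∈ T and a ≤ s
          have hsT : s ∈ T := Finset.mem_filter.mpr ⟨hsS, hfs⟩
          have hle : a ≤ s := Finset.inf'_le id hsT
          exact char_mono hψmul hle hψa
      refine ⟨a, b, ?_, ⟨?_, ?_⟩, ?_⟩
      · intro x hx
        rw [hb] at hx
        obtain ⟨s, _, rfl⟩ := Finset.mem_image.mp hx
        exact inf_le_left
      · exact hφa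
      · intro hc
        obtain ⟨x, hx, hx'⟩ := Set.mem_iUnion₂.mp hc
        rw [hb] at hx
        obtain ⟨s, hsmem, rfl⟩ := Finset.mem_image.mp hx
        have : (φ : E → Bool) (a ⊓ s) = true := hx'
        rw [hmul, hφa, (Finset.mem_filter.mp hsmem).2] at this
        simpa using this
      · intro ψ hψ
        have hψV : (ψ : E → Bool) ∈ V := by
          apply hpi
          intro i hiI
          have : (ψ : E → Bool) i = (φ : E → Bool) i :=
            hagree ψ hψ i (Finset.mem_insert_of_mem hiI)
          rw [this]
          exact (hu i hiI).2
        rw [← hVU]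
        exact hψV
    choose av bv hle hmem hsub using key
    obtain ⟨t, ht⟩ := hc.elim_finite_subcover
      (fun φ : U => Mset X (av φ) \ ⋃ x ∈ bv φ, Mset X x)
      (fun φ => piece_isOpen _ _)
      (fun ψ hψ => Set.mem_iUnion.mpr ⟨⟨ψ, hψ⟩, hmem _⟩)
    refine ⟨t.card, fun i => av (t.equivFin.symm i).1, fun i => bv (t.equivFin.symm i).1,
      fun i => hle _, ?_⟩
    apply Set.Subset.antisymm
    · intro ψ hψ
      obtain ⟨φ, hφt, hmem'⟩ := Set.mem_iUnion₂.mp (ht hψ)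
      refine Set.mem_iUnion.mpr ⟨t.equivFin ⟨φ, hφt⟩, ?_⟩
      simpa using hmem'
    · intro ψ hψ
      obtain ⟨i, hi⟩ := Set.mem_iUnion.mp hψ
      exact hsub _ hi
  · rintro ⟨n, a, b, -, rfl⟩
    exact ⟨isCompact_iUnion fun i => piece_isCompact _ _,
      isOpen_iUnion fun i => piece_isOpen _ _⟩
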